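/- For the complete graph K_n with n ≥ 2 and 1 ≤ m ≤ n−1, the m-th critical ideal I_m(K_n,X) is generated by the set B_m = { ∏_{i∈I} (x_i + 1) : I ⊆ [n], |I| = m−1 } of all products of m−1 distinct factors (x_i+1). In particular I_1(K_n,X) = (1). -/

import Mathlib

open MvPolynomial Matrix

noncomputable def glap {P : Type} [CommRing P] {V : Type} [Fintype V] [DecidableEq V]
    (m : V → V → ℕ) : Matrix V V (MvPolynomial V P) :=
  Matrix.of fun u v => if u = v then X u else - (m u v : MvPolynomial V P)

noncomputable def critIdeal {P : Type} [CommRing P] {V : Type} [Fintype V] [DecidableEq V]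
    (m : V → V → ℕ) (i : ℕ) : Ideal (MvPolynomial V P) :=
  Ideal.span { p | ∃ r s : Fin i → V, Function.Injective r ∧ Function.Injective s ∧
    p = ((glap (P := P) m).submatrix r s).det }

/-- Arc multiplicities of the complete graph `K_n`. -/
def completeArcs (n : ℕ) : Fin n → Fin n → ℕ := fun u v => if u = v then 0 else 1

section Aux
variable {R : Type} [CommRing R]

/-- Multilinear expansion of the determinant of a matrix whose rows are
`c a • v a - 1` over subsets of rows, with the scalars pulled out. -/
private lemma alt_expand {k : ℕ} (c : Fin k → R) (v : Fin k → Fin k → R) :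
    (Matrix.of fun a b => c a * v a b - 1).det =
      ∑ S : Finset (Fin k),
        (∏ a ∈ S, c a) *
          Matrix.detRowAlternating (S.piecewise v fun _ _ => (-1 : R)) := by
  have h1 : (Matrix.of fun a b => c a * v a b - 1 : Matrix (Fin k) (Fin k) R) =
      Matrix.of ((fun a => c a • v a) + fun _ _ => (-1 : R)) := by
    funext a b
    simp [Pi.add_apply, sub_eq_add_neg]
  rw [h1]
  show Matrix.detRowAlternating ((fun a => c a • v a) + fun _ _ => (-1 : R)) = _
  rw [show Matrix.detRowAlternating ((fun a => c a • v a) + fun _ _ => (-1 : R))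
      = (Matrix.detRowAlternating (R := R) (n := Fin k)).toMultilinearMap
          ((fun a => c a • v a) + fun _ _ => (-1 : R)) from rfl]
  rw [MultilinearMap.map_add_univ]
  refine Finset.sum_congr rfl fun S _ => ?_
  have h2 : (S.piecewise (fun a => c a • v a) fun _ _ => (-1 : R)) =
      fun a => (if a ∈ S then c a else 1) • (S.piecewise v (fun _ _ => (-1 : R)) a) := by
    funext a
    by_cases h : a ∈ S <;> simp [Finset.piecewise, h]
  rw [show ((Matrix.detRowAlternating (R := R) (n := Fin k)).toMultilinearMap
      (S.piecewise (fun a => c a • v a) fun _ _ => (-1 : R)))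
      = Matrix.detRowAlternating (S.piecewise (fun a => c a • v a) fun _ _ => (-1 : R)) from rfl]
  rw [h2]
  rw [show Matrix.detRowAlternating (fun a => (if a ∈ S then c a else 1) •
        (S.piecewise v (fun _ _ => (-1 : R)) a))
      = (Matrix.detRowAlternating (R := R) (n := Fin k)).toMultilinearMap
        (fun a => (if a ∈ S then c a else 1) • (S.piecewise v (fun _ _ => (-1 : R)) a)) from rfl]
  rw [MultilinearMap.map_smul_univ]
  rw [smul_eq_mul]
  congr 1
  rw [← Finset.prod_filter]
  congr 1
  simp [Finset.filter_mem_eq_inter]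

/-- If at least two rows are taken from the constant `-1` part, the determinant vanishes. -/
private lemma alt_zero {k : ℕ} (v : Fin k → Fin k → R) {S : Finset (Fin k)} {j l : Fin k}
    (hj : j ∉ S) (hl : l ∉ S) (hjl : j ≠ l) :
    Matrix.detRowAlternating (S.piecewise v fun _ _ => (-1 : R)) = 0 := by
  apply Matrix.detRowAlternating.map_eq_zero_of_eq _ _ hjl
  simp [Finset.piecewise, hj, hl]

private lemma alt_id {k : ℕ} :
    Matrix.detRowAlternating (n := Fin k) (fun a b => if b = a then (1 : R) else 0) = 1 := by
  have h : (fun a b => if b = a then (1 : R) else 0) = (1 : Matrix (Fin k) (Fin k) R) := by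
    funext a b
    simp [Matrix.one_apply, eq_comm]
  rw [h]
  show Matrix.det (1 : Matrix (Fin k) (Fin k) R) = 1
  exact Matrix.det_one

/-- The determinant of the matrix whose rows are the standard basis vectors except for
the last row, which is constantly `-1`, equals `-1`. -/
private lemma alt_lastrow {k : ℕ} (w : Fin (k + 1) → Fin (k + 1) → R)
    (hw : ∀ a, a ≠ Fin.last k → w a = fun b => if b = a then (1 : R) else 0)
    (hlast : w (Fin.last k) = fun _ => (-1 : R)) :
    Matrix.detRowAlternating w = -1 := by
  have hupd : w = Function.update w (Fin.last k)
      (∑ b : Fin (k + 1), (-1 : R) • fun b' => if b' = b then (1 : R) else 0) := by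
    funext a
    by_cases h : a = Fin.last k
    · subst h
      rw [Function.update_self, hlast]
      funext b'
      simp [Finset.sum_ite_eq]
    · rw [Function.update_of_ne h]
  rw [hupd]
  rw [show Matrix.detRowAlternating (Function.update w (Fin.last k)
        (∑ b : Fin (k + 1), (-1 : R) • fun b' => if b' = b then (1 : R) else 0))
      = (Matrix.detRowAlternating (R := R) (n := Fin (k+1))).toMultilinearMap
        (Function.update w (Fin.last k)
        (∑ b : Fin (k + 1), (-1 : R) • fun b' => if b' = b then (1 : R) else 0)) from rfl]
  rw [MultilinearMap.map_update_sum]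
  rw [Finset.sum_eq_single (Fin.last k)]
  · rw [MultilinearMap.map_update_smul]
    have : Function.update w (Fin.last k) (fun b' => if b' = Fin.last k then (1:R) else 0)
        = fun a b => if b = a then (1 : R) else 0 := by
      funext a
      by_cases h : a = Fin.last k
      · subst h; rw [Function.update_self]
      · rw [Function.update_of_ne h, hw a h]
    rw [this]
    have := alt_id (R := R) (k := k + 1)
    rw [show (Matrix.detRowAlternating (R := R) (n := Fin (k+1))).toMultilinearMap
        (fun a b => if b = a then (1 : R) else 0)
        = Matrix.detRowAlternating (fun a b => if b = a then (1 : R) else 0) from rfl, this]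
    simp
  · intro b _ hb
    rw [MultilinearMap.map_update_smul]
    have hzero : (Matrix.detRowAlternating (R := R) (n := Fin (k+1)))
        (Function.update w (Fin.last k) (fun b' => if b' = b then (1:R) else 0)) = 0 := by
      apply Matrix.detRowAlternating.map_eq_zero_of_eq _ _ hb
      rw [Function.update_of_ne hb, Function.update_self, hw b hb]
    rw [show (Matrix.detRowAlternating (R := R) (n := Fin (k+1))).toMultilinearMap
        (Function.update w (Fin.last k) (fun b' => if b' = b then (1:R) else 0))
        = (Matrix.detRowAlternating (R := R) (n := Fin (k+1)))
        (Function.update w (Fin.last k) (fun b' => if b' = b then (1:R) else 0)) from rfl, hzero]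
    simp
  · simp

end Aux

private lemma submatrix_eq {P : Type} [CommRing P] {n k : ℕ} (r s : Fin k → Fin n) :
    (glap (P := P) (completeArcs n)).submatrix r s =
      Matrix.of fun a b =>
        (X (r a) + 1) * (if r a = s b then 1 else 0) - 1 := by
  ext a b
  by_cases h : r a = s b <;>
    simp [glap, completeArcs, Matrix.submatrix_apply, h]

/-- Every `m × m` minor of the generalized Laplacian of `K_n` lies in the ideal generated
by the products `∏_{i ∈ I} (x_i + 1)` over subsets `I` of size `m - 1`. -/
private lemma minor_mem {P : Type} [CommRing P] {n m : ℕ} (r s : Fin m → Fin n)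
    (hr : Function.Injective r) :
    ((glap (P := P) (completeArcs n)).submatrix r s).det ∈
      Ideal.span { p : MvPolynomial (Fin n) P |
        ∃ I : Finset (Fin n), I.card = m - 1 ∧ p = ∏ i ∈ I, (X i + 1) } := by
  rw [submatrix_eq, alt_expand]
  apply Ideal.sum_mem
  intro S _
  by_cases hS : 2 ≤ Sᶜ.card
  · obtain ⟨j, hj, l, hl, hjl⟩ := Finset.one_lt_card.mp hS
    rw [alt_zero _ (Finset.mem_compl.mp hj) (Finset.mem_compl.mp hl) hjl, mul_zero]
    exact Ideal.zero_mem _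
  · have hcompl : S.card + Sᶜ.card = m := by
      simpa using Finset.card_add_card_compl S
    have hcard : m - 1 ≤ S.card := by omega
    have hprod : (∏ a ∈ S, (X (r a) + 1 : MvPolynomial (Fin n) P)) =
        ∏ i ∈ S.image r, (X i + 1) := by
      rw [Finset.prod_image]
      intro x _ y _ hxy
      exact hr hxy
    rw [hprod]
    obtain ⟨I, hIsub, hIcard⟩ := Finset.exists_subset_card_eq
      (show m - 1 ≤ (S.image r).card by rwa [Finset.card_image_of_injective _ hr])
    rw [← Finset.prod_sdiff hIsub]
    apply Ideal.mul_mem_right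
    apply Ideal.mul_mem_left
    exact Ideal.subset_span ⟨I, hIcard, rfl⟩

/-- Every product `∏_{i ∈ I} (x_i + 1)` with `|I| = k` lies in the `(k+1)`-st critical ideal
of `K_n`, provided there exist two distinct vertices outside `I`. -/
private lemma gen_mem {P : Type} [CommRing P] {n k : ℕ} (I : Finset (Fin n)) (hI : I.card = k)
    {u v : Fin n} (hu : u ∉ I) (hv : v ∉ I) (huv : u ≠ v) :
    (∏ i ∈ I, (X i + 1) : MvPolynomial (Fin n) P) ∈
      critIdeal (P := P) (completeArcs n) (k + 1) := by
  classical
  set g : Fin k → Fin n := fun a => (I.orderIsoOfFin hI a : Fin n) with hg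
  have hginj : Function.Injective g := fun a b hab => by
    have := (I.orderIsoOfFin hI).injective (Subtype.ext hab)
    exact this
  have hgI : ∀ a, g a ∈ I := fun a => (I.orderIsoOfFin hI a).2
  have himage : Finset.image g Finset.univ = I := by
    apply Finset.eq_of_subset_of_card_le
    · intro x hx
      obtain ⟨a, _, rfl⟩ := Finset.mem_image.mp hx
      exact hgI a
    · rw [Finset.card_image_of_injective _ hginj, Finset.card_univ]
      simp [hI]
  set r : Fin (k + 1) → Fin n := Fin.snoc g u with hrdef
  set s : Fin (k + 1) → Fin n := Fin.snoc g v with hsdef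
  have hrval : ∀ a : Fin k, r a.castSucc = g a := fun a => Fin.snoc_castSucc _ _ _
  have hsval : ∀ a : Fin k, s a.castSucc = g a := fun a => Fin.snoc_castSucc _ _ _
  have hrlast : r (Fin.last k) = u := Fin.snoc_last _ _
  have hslast : s (Fin.last k) = v := Fin.snoc_last _ _
  have hsnoc_inj : ∀ (x : Fin n), x ∉ I →
      Function.Injective (Fin.snoc g x : Fin (k+1) → Fin n) := by
    intro x hx a b hab
    induction a using Fin.lastCases with
    | last =>
      induction b using Fin.lastCases with
      | last => rfl
      | cast b =>
        rw [Fin.snoc_last, Fin.snoc_castSucc] at hab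
        exact absurd (hab ▸ hgI b) hx
    | cast a =>
      induction b using Fin.lastCases with
      | last =>
        rw [Fin.snoc_last, Fin.snoc_castSucc] at hab
        exact (hx (hab ▸ hgI a)).elim
      | cast b =>
        rw [Fin.snoc_castSucc, Fin.snoc_castSucc] at hab
        exact congrArg Fin.castSucc (hginj hab)
  have hrinj : Function.Injective r := hsnoc_inj u hu
  have hsinj : Function.Injective s := hsnoc_inj v hv
  -- the determinant of the chosen minor is `-∏_{i ∈ I} (x_i + 1)`
  have hdet : ((glap (P := P) (completeArcs n)).submatrix r s).det =
      -∏ i ∈ I, (X i + 1) := by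
    rw [submatrix_eq, alt_expand]
    rw [Finset.sum_eq_single (Finset.univ.erase (Fin.last k))]
    · -- the main term
      have hvmatch : ∀ a : Fin (k+1), a ≠ Fin.last k → ∀ b,
          (r a = s b) ↔ (b = a) := by
        intro a ha b
        constructor
        · intro hab
          induction a using Fin.lastCases with
          | last => exact absurd rfl ha
          | cast a =>
            induction b using Fin.lastCases with
            | last =>
              rw [hrval, hslast] at hab
              exact absurd (hab ▸ hgI a) hv
            | cast b =>
              rw [hrval, hsval] at hab
              exact congrArg Fin.castSucc (hginj hab).symm
        · rintro rfl
          induction b using Fin.lastCases with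
          | last => exact absurd rfl ha
          | cast b => rw [hrval, hsval]
      have hmain : Matrix.detRowAlternating
          ((Finset.univ.erase (Fin.last k)).piecewise
            (fun a b => if r a = s b then (1 : MvPolynomial (Fin n) P) else 0)
            (fun _ _ => (-1 : MvPolynomial (Fin n) P))) = -1 := by
        apply alt_lastrow
        · intro a ha
          rw [Finset.piecewise_eq_of_mem _ _ _ (Finset.mem_erase.mpr ⟨ha, Finset.mem_univ a⟩)]
          funext b
          by_cases h : r a = s b
          · rw [if_pos h, if_pos ((hvmatch a ha b).mp h)]
          · rw [if_neg h, if_neg (fun hb => h ((hvmatch a ha b).mpr hb))]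
        · rw [Finset.piecewise_eq_of_notMem _ _ _ (by simp)]
      rw [hmain]
      have herase : (∏ a ∈ Finset.univ.erase (Fin.last k),
          ((X (r a) + 1) : MvPolynomial (Fin n) P)) = ∏ i ∈ I, (X i + 1) := by
        rw [← Finset.compl_singleton, ← Fin.image_castSucc, Finset.prod_image
          (fun a _ b _ h => Fin.castSucc_injective k h)]
        rw [← himage, Finset.prod_image (fun a _ b _ h => hginj h)]
        refine Finset.prod_congr rfl fun a _ => ?_
        rw [hrval]
      rw [herase]
      ring
    · -- all other terms vanish
      intro S _ hS
      by_cases hlS : Fin.last k ∈ S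
      · have hzero : ((S.piecewise
            (fun a b => if r a = s b then (1 : MvPolynomial (Fin n) P) else 0)
            (fun _ _ => (-1 : MvPolynomial (Fin n) P)))) (Fin.last k) = 0 := by
          rw [Finset.piecewise_eq_of_mem _ _ _ hlS]
          funext b
          have hb : ¬ (r (Fin.last k) = s b) := by
            intro hb
            rw [hrlast] at hb
            induction b using Fin.lastCases with
            | last => rw [hslast] at hb; exact huv hb
            | cast b => rw [hsval] at hb; exact hu (hb ▸ hgI b)
          simp [hb]
        rw [(Matrix.detRowAlternating (R := MvPolynomial (Fin n) P)
          (n := Fin (k+1))).map_coord_zero (Fin.last k) hzero, mul_zero]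
      · have hsub : S ⊆ Finset.univ.erase (Fin.last k) := fun x hx =>
          Finset.mem_erase.mpr ⟨fun h => hlS (h ▸ hx), Finset.mem_univ x⟩
        obtain ⟨j, hjmem, hjS⟩ := Finset.exists_of_ssubset (hsub.ssubset_of_ne hS)
        rw [alt_zero _ hjS hlS (Finset.mem_erase.mp hjmem).1, mul_zero]
    · simp
  have hmem : ((glap (P := P) (completeArcs n)).submatrix r s).det ∈
      critIdeal (P := P) (completeArcs n) (k + 1) :=
    Ideal.subset_span ⟨r, s, hrinj, hsinj, rfl⟩
  have := neg_mem hmem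
  rw [hdet, neg_neg] at this
  exact this

/-- For `K_n` with `n ≥ 2` and `1 ≤ m ≤ n − 1`, the `m`-th critical ideal is generated by all
products `∏_{i ∈ I} (x_i + 1)` over subsets `I ⊆ [n]` with `|I| = m − 1`.  In particular
`I_1(K_n, X) = (1)`. -/
theorem critIdeal_complete (P : Type) [CommRing P] (n : ℕ) (hn : 2 ≤ n) :
    (∀ m : ℕ, 1 ≤ m → m ≤ n - 1 →
      critIdeal (P := P) (completeArcs n) m
        = Ideal.span { p | ∃ I : Finset (Fin n), I.card = m - 1 ∧ p = ∏ i ∈ I, (X i + 1) }) ∧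
    critIdeal (P := P) (completeArcs n) 1 = ⊤ := by
  have main : ∀ m : ℕ, 1 ≤ m → m ≤ n - 1 →
      critIdeal (P := P) (completeArcs n) m
        = Ideal.span { p | ∃ I : Finset (Fin n), I.card = m - 1 ∧ p = ∏ i ∈ I, (X i + 1) } := by
    intro m hm1 hm2
    apply le_antisymm
    · rw [critIdeal, Ideal.span_le]
      rintro p ⟨r, s, hr, hs, rfl⟩
      exact minor_mem r s hr
    · rw [Ideal.span_le]
      rintro p ⟨I, hI, rfl⟩
      obtain ⟨k, rfl⟩ : ∃ k, m = k + 1 := ⟨m - 1, by omega⟩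
      have hIk : I.card = k := by simpa using hI
      have hc : 2 ≤ Iᶜ.card := by
        rw [Finset.card_compl, hIk, Fintype.card_fin]
        omega
      obtain ⟨u, hu, v, hv, huv⟩ := Finset.one_lt_card.mp hc
      exact gen_mem I hIk (Finset.mem_compl.mp hu) (Finset.mem_compl.mp hv) huv
  refine ⟨main, ?_⟩
  rw [main 1 le_rfl (by omega), Ideal.eq_top_iff_one]
  exact Ideal.subset_span ⟨∅, by simp⟩
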